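/- (Lemma C.1.) Fix an integer K ≥ 1, real numbers a₁, …, a_K > 0 and t ≠ 0, and on the probability simplex Δ = {b ∈ ℝ^K : b_k ≥ 0 for all k, ∑_k b_k = 1} define R(b) := (1/K)·∑_{k=1}^K a_k / √(t²·b_k + 1). Let A := max_k a_k and M_a := {m : a_m = A}. Then for any b* minimizing R over Δ, one has b*_m = b*_{m'} > 0 for all m, m' ∈ M_a. -/

import Mathlib

/-- Strict midpoint convexity of `x ↦ A/√(sx+1)`. -/
lemma aux_mid {s A x y : ℝ} (hs : 0 < s) (hA : 0 < A) (hx : 0 ≤ x) (hy : 0 ≤ y)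
    (hxy : x ≠ y) :
    A / Real.sqrt (s * ((x + y) / 2) + 1) + A / Real.sqrt (s * ((x + y) / 2) + 1)
      < A / Real.sqrt (s * x + 1) + A / Real.sqrt (s * y + 1) := by
  set p := Real.sqrt (s * x + 1) with hp
  set q := Real.sqrt (s * y + 1) with hq
  set r := Real.sqrt (s * ((x + y) / 2) + 1) with hr
  have hp2 : p ^ 2 = s * x + 1 := Real.sq_sqrt (by nlinarith)
  have hq2 : q ^ 2 = s * y + 1 := Real.sq_sqrt (by nlinarith)
  have hr2 : r ^ 2 = s * ((x + y) / 2) + 1 := Real.sq_sqrt (by nlinarith)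
  have hp0 : 0 < p := Real.sqrt_pos.mpr (by nlinarith)
  have hq0 : 0 < q := Real.sqrt_pos.mpr (by nlinarith)
  have hr0 : 0 < r := Real.sqrt_pos.mpr (by nlinarith)
  have hpqne : p ≠ q := by
    intro h
    apply hxy
    have h2 : s * x = s * y := by
      have := hp2; rw [h, hq2] at this; linarith
    exact mul_left_cancel₀ (ne_of_gt hs) h2
  have hd : 0 < (p - q) ^ 2 :=
    lt_of_le_of_ne (sq_nonneg _) (Ne.symm (pow_ne_zero 2 (sub_ne_zero.mpr hpqne)))
  have key1 : (p + q) / 2 < r := by nlinarith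
  have main : 2 * (p * q) < r * (p + q) := by
    nlinarith [mul_lt_mul_of_pos_right key1 (show (0:ℝ) < p + q by linarith), hd]
  have e1 : A / r + A / r = 2 * A / r := by ring
  rw [e1, div_add_div _ _ (ne_of_gt hp0) (ne_of_gt hq0),
    div_lt_div_iff₀ hr0 (mul_pos hp0 hq0)]
  nlinarith [mul_lt_mul_of_pos_left main hA]

set_option maxHeartbeats 1600000 in
/-- Moving a bit of mass `ε` from a coordinate with value `b > 0` (coefficient `ak`)
to a coordinate with value `0` (coefficient `A ≥ ak`) strictly decreases the sum. -/
lemma aux_pos {s A ak b : ℝ} (hs : 0 < s) (hak : 0 < ak) (hA : ak ≤ A) (hb : 0 < b) :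
    ∃ ε : ℝ, 0 < ε ∧ ε ≤ b ∧
      A / Real.sqrt (s * ε + 1) + ak / Real.sqrt (s * (b - ε) + 1)
        < A + ak / Real.sqrt (s * b + 1) := by
  have hA0 : 0 < A := lt_of_lt_of_le hak hA
  set w := Real.sqrt (s * b + 1) with hwdef
  have hw2 : w ^ 2 = s * b + 1 := Real.sq_sqrt (by nlinarith)
  have hw1 : 1 < w := by nlinarith [Real.sqrt_nonneg (s * b + 1)]
  set Q := A * ((s * b + 1) + w) / ak with hQdef
  have hQ2 : 2 < Q := by
    rw [hQdef, lt_div_iff₀ hak]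
    have h2 : 2 < s * b + 1 + w := by nlinarith
    nlinarith [mul_lt_mul_of_pos_left h2 hak,
      mul_le_mul_of_nonneg_right hA (by linarith : (0:ℝ) ≤ s * b + 1 + w)]
  have hQpos : 0 < (Q - 2) / (2 * s) := div_pos (by linarith) (by linarith)
  refine ⟨min b ((Q - 2) / (2 * s)), lt_min hb hQpos, min_le_left _ _, ?_⟩
  set ε := min b ((Q - 2) / (2 * s)) with hεdef
  have hε0 : 0 < ε := lt_min hb hQpos
  have hεb : ε ≤ b := min_le_left _ _
  have hεQ : s * ε ≤ (Q - 2) / 2 := by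
    have h'' := min_le_right b ((Q - 2) / (2 * s))
    have h3 : s * ε ≤ s * ((Q - 2) / (2 * s)) :=
      mul_le_mul_of_nonneg_left h'' hs.le
    calc s * ε ≤ s * ((Q - 2) / (2 * s)) := h3
      _ = (Q - 2) / 2 := by field_simp
  clear_value ε
  set p := Real.sqrt (s * ε + 1) with hpdef
  have hp2 : p ^ 2 = s * ε + 1 := Real.sq_sqrt (by nlinarith)
  have hp1 : 1 ≤ p := by nlinarith [Real.sqrt_nonneg (s * ε + 1)]
  have hpub : p ≤ 1 + s * ε / 2 := by
    have h1 : s * ε + 1 ≤ (1 + s * ε / 2) ^ 2 := by nlinarith [sq_nonneg (s * ε)]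
    calc p ≤ Real.sqrt ((1 + s * ε / 2) ^ 2) := Real.sqrt_le_sqrt h1
      _ = 1 + s * ε / 2 := Real.sqrt_sq (by nlinarith)
  set u := Real.sqrt (s * (b - ε) + 1) with hudef
  have hu2 : u ^ 2 = s * (b - ε) + 1 := Real.sq_sqrt (by nlinarith)
  have hu1 : 1 ≤ u := by nlinarith [Real.sqrt_nonneg (s * (b - ε) + 1)]
  have hp0 : 0 < p := lt_of_lt_of_le one_pos hp1
  have hu0 : 0 < u := lt_of_lt_of_le one_pos hu1
  have hw0 : 0 < w := lt_trans one_pos hw1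
  have s3 : ak * Q = A * ((s * b + 1) + w) := by
    rw [hQdef]; field_simp
  clear_value p u w Q
  have key : ak * (p * (p + 1)) < A * (u * w * (w + u)) := by
    have s1 : ak * (p * (p + 1)) ≤ ak * (2 + 3 * (s * ε) / 2) := by nlinarith
    have s2 : ak * (2 + 3 * (s * ε) / 2) < ak * Q := by nlinarith
    have s4 : A * ((s * b + 1) + w) ≤ A * (u * w * (w + u)) := by
      have hu21 : (0:ℝ) ≤ u ^ 2 - 1 := by nlinarith
      have h4 : (0:ℝ) ≤ w * ((u - 1) * w + (u ^ 2 - 1)) :=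
        mul_nonneg hw0.le (by nlinarith [mul_nonneg (sub_nonneg.mpr hu1) hw0.le])
      have hw2A : A * w ^ 2 = A * (s * b + 1) := by rw [hw2]
      nlinarith [mul_nonneg hA0.le h4, hw2A]
    linarith
  -- now conclude
  have hgoal : (ak * w - u * ak) * p < (A * p - A) * (u * w) := by
    have e1 : (w - u) * (w + u) = s * ε := by linear_combination hw2 - hu2
    have e2 : (p - 1) * (p + 1) = s * ε := by linear_combination hp2
    have hkey2 : ak * (p * (p + 1)) * (s * ε) < A * (u * w * (w + u)) * (s * ε) :=
      mul_lt_mul_of_pos_right key (by positivity)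
    have hq : ((A * p - A) * (u * w) - (ak * w - u * ak) * p) * ((w + u) * (p + 1))
        = A * (u * w * (w + u)) * (s * ε) - ak * (p * (p + 1)) * (s * ε) := by
      linear_combination (A * (u * w) * (w + u)) * e2 - (ak * p * (p + 1)) * e1
    have hpos : 0 < ((A * p - A) * (u * w) - (ak * w - u * ak) * p) * ((w + u) * (p + 1)) := by
      rw [hq]; linarith
    have hP : (0:ℝ) < (w + u) * (p + 1) :=
      mul_pos (by linarith) (by linarith)
    rcases mul_pos_iff.mp hpos with ⟨h, _⟩ | ⟨_, h⟩
    · linarith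
    · linarith
  have h5 : ak / u - ak / w < A - A / p := by
    rw [div_sub_div _ _ (ne_of_gt hu0) (ne_of_gt hw0)]
    have e3 : A - A / p = (A * p - A) / p := by field_simp
    rw [e3, div_lt_div_iff₀ (mul_pos hu0 hw0) hp0]
    exact hgoal
  linarith

/-- Splitting a sum that differs from another in only two coordinates. -/
lemma sum_two_diff {K : ℕ} {m k : Fin K} (hmk : m ≠ k) (F G : Fin K → ℝ)
    (h : ∀ j, j ≠ m → j ≠ k → F j = G j) :
    ∑ j, F j = (∑ j, G j) + ((F m - G m) + (F k - G k)) := by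
  classical
  have h1 : ∑ j, (F j - G j) = ∑ j ∈ ({m, k} : Finset (Fin K)), (F j - G j) := by
    refine (Finset.sum_subset (Finset.subset_univ _) ?_).symm
    intro j _ hj
    simp only [Finset.mem_insert, Finset.mem_singleton, not_or] at hj
    rw [h j hj.1 hj.2]; ring
  rw [Finset.sum_sub_distrib, Finset.sum_pair hmk] at h1
  linarith

/-- Lemma C.1.  On the probability simplex, any minimizer `b*` of
`R(b) = (1/K)·∑ₖ aₖ/√(t²bₖ+1)` takes a common positive value on the set of indices where
`a` attains its maximum `A` (characterized by `hub` and `hex`). -/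
theorem stmt_8 {K : ℕ} (hK : 0 < K) (a : Fin K → ℝ) (ha : ∀ k, 0 < a k)
    (t : ℝ) (ht : t ≠ 0)
    (R : (Fin K → ℝ) → ℝ)
    (hR : ∀ b, R b = (1 / K : ℝ) * ∑ k, a k / Real.sqrt (t ^ 2 * b k + 1))
    (A : ℝ) (hub : ∀ k, a k ≤ A) (hex : ∃ k, a k = A)
    (bstar : Fin K → ℝ)
    (hmem : (∀ k, 0 ≤ bstar k) ∧ ∑ k, bstar k = 1)
    (hmin : ∀ b : Fin K → ℝ, (∀ k, 0 ≤ b k) → (∑ k, b k = 1) → R bstar ≤ R b) :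
    ∀ m m' : Fin K, a m = A → a m' = A → bstar m = bstar m' ∧ 0 < bstar m := by
  have hs : (0:ℝ) < t ^ 2 := by positivity
  have hA0 : 0 < A := by obtain ⟨k0, hk0⟩ := hex; rw [← hk0]; exact ha k0
  have hKpos : (0:ℝ) < (1 / K : ℝ) := by
    have : (0:ℝ) < (K : ℝ) := Nat.cast_pos.mpr hK
    positivity
  -- minimization in terms of the bare sum
  have hminS : ∀ b : Fin K → ℝ, (∀ k, 0 ≤ b k) → (∑ k, b k = 1) →
      (∑ j, a j / Real.sqrt (t ^ 2 * bstar j + 1))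
        ≤ ∑ j, a j / Real.sqrt (t ^ 2 * b j + 1) := by
    intro b h1 h2
    have h3 := hmin b h1 h2
    rw [hR, hR] at h3
    exact (mul_le_mul_iff_right₀ hKpos).mp h3
  -- positivity of the minimizer on the argmax set
  have claim_pos : ∀ m : Fin K, a m = A → 0 < bstar m := by
    intro m ham
    rcases lt_or_eq_of_le (hmem.1 m) with h | h
    · exact h
    exfalso
    have hm0 : bstar m = 0 := h.symm
    have hexk : ∃ k, 0 < bstar k := by
      by_contra hc
      push_neg at hc
      have : ∑ k, bstar k ≤ 0 := Finset.sum_nonpos (fun k _ => hc k)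
      linarith [hmem.2]
    obtain ⟨k, hk⟩ := hexk
    have hkm : k ≠ m := by
      intro hEq; rw [hEq, hm0] at hk; exact lt_irrefl _ hk
    obtain ⟨ε, hε0, hεb, hεlt⟩ := aux_pos hs (ha k) (hub k) hk
    set b' : Fin K → ℝ := fun j => if j = m then ε else if j = k then bstar k - ε else bstar j
      with hb'def
    have hb'm : b' m = ε := by simp [hb'def]
    have hb'k : b' k = bstar k - ε := by simp [hb'def, hkm]
    have hoff : ∀ j, j ≠ m → j ≠ k → b' j = bstar j := by
      intro j h1 h2; simp [hb'def, h1, h2]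
    have hnn : ∀ j, 0 ≤ b' j := by
      intro j
      by_cases h1 : j = m
      · rw [h1, hb'm]; linarith
      by_cases h2 : j = k
      · rw [h2, hb'k]; linarith
      · rw [hoff j h1 h2]; exact hmem.1 j
    have hsum : ∑ j, b' j = 1 := by
      rw [sum_two_diff (Ne.symm hkm) b' bstar hoff, hmem.2, hb'm, hb'k, hm0]
      ring
    have hle := hminS b' hnn hsum
    have hsplit := sum_two_diff (Ne.symm hkm)
      (fun j => a j / Real.sqrt (t ^ 2 * b' j + 1))
      (fun j => a j / Real.sqrt (t ^ 2 * bstar j + 1))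
      (fun j h1 h2 => by simp only [hoff j h1 h2])
    simp only [hb'm, hb'k, hm0, ham] at hsplit
    have hzero : Real.sqrt (t ^ 2 * 0 + 1) = 1 := by
      norm_num
    rw [hzero] at hsplit
    have hAdiv : A / 1 = A := div_one A
    rw [hAdiv] at hsplit
    -- hsplit : ∑ (for b') = ∑ (for bstar) + (A/√(t²ε+1) - A) + (a k/√(t²(bk-ε)+1) - a k/√(t²bk+1))
    have : ∑ j, a j / Real.sqrt (t ^ 2 * b' j + 1)
        < ∑ j, a j / Real.sqrt (t ^ 2 * bstar j + 1) := by
      rw [hsplit]; linarith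
    linarith
  intro m m' ham ham'
  refine ⟨?_, claim_pos m ham⟩
  by_cases hmm : m = m'
  · rw [hmm]
  by_contra hne
  set x := bstar m with hx
  set y := bstar m' with hy
  set b' : Fin K → ℝ := fun j => if j = m then (x + y) / 2 else if j = m' then (x + y) / 2
    else bstar j with hb'def
  have hb'm : b' m = (x + y) / 2 := by simp [hb'def]
  have hb'm' : b' m' = (x + y) / 2 := by simp [hb'def, hmm]
  have hoff : ∀ j, j ≠ m → j ≠ m' → b' j = bstar j := by
    intro j h1 h2; simp [hb'def, h1, h2]
  have hx0 : 0 ≤ x := hmem.1 m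
  have hy0 : 0 ≤ y := hmem.1 m'
  have hnn : ∀ j, 0 ≤ b' j := by
    intro j
    by_cases h1 : j = m
    · rw [h1, hb'm]; linarith
    by_cases h2 : j = m'
    · rw [h2, hb'm']; linarith
    · rw [hoff j h1 h2]; exact hmem.1 j
  have hsum : ∑ j, b' j = 1 := by
    rw [sum_two_diff hmm b' bstar hoff, hmem.2, hb'm, hb'm', ← hx, ← hy]
    ring
  have hle := hminS b' hnn hsum
  have hsplit := sum_two_diff hmm
    (fun j => a j / Real.sqrt (t ^ 2 * b' j + 1))
    (fun j => a j / Real.sqrt (t ^ 2 * bstar j + 1))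
    (fun j h1 h2 => by simp only [hoff j h1 h2])
  simp only [hb'm, hb'm', ham, ham', ← hx, ← hy] at hsplit
  have hmid := aux_mid hs hA0 hx0 hy0 hne
  have : ∑ j, a j / Real.sqrt (t ^ 2 * b' j + 1)
      < ∑ j, a j / Real.sqrt (t ^ 2 * bstar j + 1) := by
    rw [hsplit]
    have e : t ^ 2 * ((x + y) / 2) + 1 = t ^ 2 * ((x + y) / 2) + 1 := rfl
    linarith [hmid]
  linarith
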